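/- Let 0 < α, β < 1, let κ = ((1−α²)(1−β²)/(α²β²))^{1/4}, and assume κ ∈ (0,1). Suppose ν₁, ν₂ ≥ 0 and c₁ = α²ν₁, c₂ = β²ν₂, Δ = 1 + c₁ + c₂ + (1−κ²)c₁c₂ satisfy ν₁Δ = c₁ + κ²c₂ + (1−κ²)c₁c₂ and ν₂Δ = κ²c₁ + c₂ + (1−κ²)c₁c₂. Then ν₁ = ν₂ = 0. -/

import Mathlib

set_option maxHeartbeats 1000000 in
/-- Edge uniqueness for the correlated spiked Wigner deterministic system:
with `κ = ((1−α²)(1−β²)/(α²β²))^{1/4} ∈ (0,1)`, `ν₁, ν₂ ≥ 0`,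
`c₁ = α²ν₁`, `c₂ = β²ν₂`, `Δ = 1 + c₁ + c₂ + (1−κ²)c₁c₂`, the two equations
force `ν₁ = ν₂ = 0`. -/
theorem stmt10 (α β : ℝ) (hα : α ∈ Set.Ioo (0:ℝ) 1) (hβ : β ∈ Set.Ioo (0:ℝ) 1)
    (κ : ℝ) (hκdef : κ = ((1 - α ^ 2) * (1 - β ^ 2) / (α ^ 2 * β ^ 2)) ^ ((1 : ℝ) / 4))
    (hκ : κ ∈ Set.Ioo (0:ℝ) 1)
    (ν₁ ν₂ : ℝ) (hν₁ : 0 ≤ ν₁) (hν₂ : 0 ≤ ν₂)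
    (c₁ c₂ Δ : ℝ) (hc₁ : c₁ = α ^ 2 * ν₁) (hc₂ : c₂ = β ^ 2 * ν₂)
    (hΔ : Δ = 1 + c₁ + c₂ + (1 - κ ^ 2) * c₁ * c₂)
    (h1 : ν₁ * Δ = c₁ + κ ^ 2 * c₂ + (1 - κ ^ 2) * c₁ * c₂)
    (h2 : ν₂ * Δ = κ ^ 2 * c₁ + c₂ + (1 - κ ^ 2) * c₁ * c₂) :
    ν₁ = 0 ∧ ν₂ = 0 := by
  obtain ⟨hα0, hα1⟩ := hα
  obtain ⟨hβ0, hβ1⟩ := hβ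
  obtain ⟨hκ0, hκ1⟩ := hκ
  have hα2 : (0:ℝ) < α ^ 2 := by positivity
  have hβ2 : (0:ℝ) < β ^ 2 := by positivity
  have hα2' : α ^ 2 < 1 := by nlinarith
  have hβ2' : β ^ 2 < 1 := by nlinarith
  have hq0 : (0:ℝ) < (1 - α ^ 2) * (1 - β ^ 2) / (α ^ 2 * β ^ 2) := by
    apply div_pos
    · nlinarith
    · positivity
  have hκ4 : κ ^ 4 = (1 - α ^ 2) * (1 - β ^ 2) / (α ^ 2 * β ^ 2) := by
    rw [hκdef, ← Real.rpow_natCast (_ ^ ((1:ℝ)/4)) 4, ← Real.rpow_mul hq0.le]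
    norm_num
  have hkey : (1 - α ^ 2) * (1 - β ^ 2) = κ ^ 4 * (α ^ 2 * β ^ 2) := by
    rw [hκ4, div_mul_cancel₀ _ (mul_pos hα2 hβ2).ne']
  have hκ2 : κ ^ 2 < 1 := by nlinarith
  have hκ2p : (0:ℝ) < κ ^ 2 := by positivity
  -- dispose of the cases where one of them vanishes
  rcases eq_or_lt_of_le hν₁ with h₁ | h₁
  · have hc₁0 : c₁ = 0 := by rw [hc₁, ← h₁]; ring
    have hzz : κ ^ 2 * c₂ = 0 := by
      rw [hc₁0, ← h₁] at h1; linarith only [h1]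
    have hc₂0 : c₂ = 0 := by
      rcases mul_eq_zero.1 hzz with h | h
      · exact absurd h hκ2p.ne'
      · exact h
    refine ⟨h₁.symm, ?_⟩
    rw [hc₂] at hc₂0
    rcases mul_eq_zero.1 hc₂0 with h | h
    · exact absurd h hβ2.ne'
    · exact h
  rcases eq_or_lt_of_le hν₂ with h₂ | h₂
  · exfalso
    have hc₂0 : c₂ = 0 := by rw [hc₂, ← h₂]; ring
    have hzz : κ ^ 2 * c₁ = 0 := by
      rw [hc₂0, ← h₂] at h2; linarith only [h2]
    have hc₁0 : c₁ = 0 := by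
      rcases mul_eq_zero.1 hzz with h | h
      · exact absurd h hκ2p.ne'
      · exact h
    rw [hc₁] at hc₁0
    rcases mul_eq_zero.1 hc₁0 with h | h
    · exact absurd h hα2.ne'
    · exact absurd h h₁.ne'
  -- both positive: derive a contradiction
  exfalso
  have hc₁p : 0 < c₁ := by rw [hc₁]; positivity
  have hc₂p : 0 < c₂ := by rw [hc₂]; positivity
  have hcc : 0 < c₁ * c₂ := mul_pos hc₁p hc₂p
  have hΔp : 0 < Δ := by
    rw [hΔ]
    have := mul_pos (show (0:ℝ) < 1 - κ ^ 2 by linarith) hcc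
    linarith only [this, hc₁p, hc₂p]
  have hν₁1 : ν₁ < 1 := by
    have hlt : ν₁ * Δ < 1 * Δ := by
      rw [h1, hΔ]
      linarith only [mul_lt_mul_of_pos_right hκ2 hc₂p]
    exact lt_of_mul_lt_mul_right hlt hΔp.le
  have hν₂1 : ν₂ < 1 := by
    have hlt : ν₂ * Δ < 1 * Δ := by
      rw [h2, hΔ]
      linarith only [mul_lt_mul_of_pos_right hκ2 hc₁p]
    exact lt_of_mul_lt_mul_right hlt hΔp.le
  have h1' : ν₁ * (1 + c₁ + c₂ + (1 - κ ^ 2) * c₁ * c₂)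
      = c₁ + κ ^ 2 * c₂ + (1 - κ ^ 2) * c₁ * c₂ := by rw [← hΔ]; exact h1
  have h2' : ν₂ * (1 + c₁ + c₂ + (1 - κ ^ 2) * c₁ * c₂)
      = κ ^ 2 * c₁ + c₂ + (1 - κ ^ 2) * c₁ * c₂ := by rw [← hΔ]; exact h2
  have e1 : ν₁ * (1 - α ^ 2) =
      κ ^ 2 * c₂ - ν₁ * c₁ - ν₁ * c₂ + (1 - ν₁) * ((1 - κ ^ 2) * c₁ * c₂) := by
    linear_combination h1' + hc₁
  have e2 : ν₂ * (1 - β ^ 2) =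
      κ ^ 2 * c₁ - ν₂ * c₁ - ν₂ * c₂ + (1 - ν₂) * ((1 - κ ^ 2) * c₁ * c₂) := by
    linear_combination h2' + hc₂
  have hz1 : (0:ℝ) ≤ 1 - (1 - ν₁) * (1 - κ ^ 2) := by
    have := mul_nonneg hν₁ (show (0:ℝ) ≤ 1 - κ ^ 2 by linarith)
    nlinarith [this, hκ2p]
  have hz2 : (0:ℝ) ≤ 1 - (1 - ν₂) * (1 - κ ^ 2) := by
    have := mul_nonneg hν₂ (show (0:ℝ) ≤ 1 - κ ^ 2 by linarith)
    nlinarith [this, hκ2p]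
  have hzA : (1 - ν₁) * ((1 - κ ^ 2) * c₁ * c₂) ≤ c₁ * c₂ := by
    have := mul_nonneg hz1 hcc.le
    nlinarith [this]
  have hzB : (1 - ν₂) * ((1 - κ ^ 2) * c₁ * c₂) ≤ c₁ * c₂ := by
    have := mul_nonneg hz2 hcc.le
    nlinarith [this]
  have hc₁lt : c₁ < ν₁ := by rw [hc₁]; exact mul_lt_of_lt_one_left h₁ hα2'
  have hc₂lt : c₂ < ν₂ := by rw [hc₂]; exact mul_lt_of_lt_one_left h₂ hβ2'
  have hwA : c₁ * c₂ < ν₁ * c₂ := mul_lt_mul_of_pos_right hc₁lt hc₂p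
  have hwB : c₂ * c₁ < ν₂ * c₁ := mul_lt_mul_of_pos_right hc₂lt hc₁p
  have hA : ν₁ * (1 - α ^ 2) < κ ^ 2 * c₂ := by
    rw [e1]
    linarith only [hzA, hwA, mul_pos h₁ hc₁p]
  have hB : ν₂ * (1 - β ^ 2) < κ ^ 2 * c₁ := by
    rw [e2]
    linarith only [hzB, hwB, mul_pos h₂ hc₂p]
  have hApos : 0 < ν₁ * (1 - α ^ 2) := mul_pos h₁ (by linarith)
  have hBpos : 0 < ν₂ * (1 - β ^ 2) := mul_pos h₂ (by linarith)
  have hprod : (ν₁ * (1 - α ^ 2)) * (ν₂ * (1 - β ^ 2)) < (κ ^ 2 * c₂) * (κ ^ 2 * c₁) :=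
    mul_lt_mul'' hA hB hApos.le hBpos.le
  rw [hc₁, hc₂] at hprod
  have heq : (ν₁ * (1 - α ^ 2)) * (ν₂ * (1 - β ^ 2))
      = (κ ^ 2 * (β ^ 2 * ν₂)) * (κ ^ 2 * (α ^ 2 * ν₁)) := by
    linear_combination (ν₁ * ν₂) * hkey
  linarith only [hprod, heq.ge]
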